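/- Let D, d₁, d₂ be positive integers and let ℓ = (α₁,…,α_D) be a random vector in ℝ^D whose coordinates are independent and identically distributed with E[α_j] = 0, E[α_j²] = 1, and E[α_j⁴] = γ (and finite fourth moment). Let M₁ ∈ ℝ^{D×d₁} and M₂ ∈ ℝ^{D×d₂} be deterministic matrices with rows m_{1j}ᵀ and m_{2j}ᵀ respectively. Then E[(M₁ᵀ ℓ ℓᵀ M₂)(M₂ᵀ ℓ ℓᵀ M₁)] = M₁ᵀ[(γ − 3)·W₂ + 2·M₂M₂ᵀ + tr(M₂M₂ᵀ)·I_D]·M₁, where W₂ = diag(m_{21}ᵀm_{21}, …, m_{2D}ᵀm_{2D}). -/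

import Mathlib

open MeasureTheory ProbabilityTheory Matrix

section Aux

variable {Ω : Type*} [MeasurableSpace Ω] {μ : Measure Ω}
  {D : ℕ} {γ : ℝ} {ℓ : Ω → Fin D → ℝ}

lemma aux_indep_lone (hmeas : ∀ j, Measurable fun ω => ℓ ω j)
    (hindep : iIndepFun
      (fun j ω => ℓ ω j) μ)
    (x y z w : Fin D) (hx : x ≠ w) (hy : y ≠ w) (hz : z ≠ w) :
    IndepFun (fun ω => ℓ ω x * ℓ ω y * ℓ ω z) (fun ω => ℓ ω w) μ := by
  classical
  have hdisj : Disjoint ({x, y, z} : Finset (Fin D)) ({w} : Finset (Fin D)) := by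
    simp only [Finset.disjoint_singleton_right, Finset.mem_insert, Finset.mem_singleton]
    push_neg
    exact ⟨hx.symm, hy.symm, hz.symm⟩
  have h := hindep.indepFun_finset {x, y, z} {w} hdisj hmeas
  have hx' : x ∈ ({x, y, z} : Finset (Fin D)) := by simp
  have hy' : y ∈ ({x, y, z} : Finset (Fin D)) := by simp
  have hz' : z ∈ ({x, y, z} : Finset (Fin D)) := by simp
  have hw' : w ∈ ({w} : Finset (Fin D)) := by simp
  exact h.comp (φ := fun v : ({x,y,z} : Finset (Fin D)) → ℝ => v ⟨x, hx'⟩ * v ⟨y, hy'⟩ * v ⟨z, hz'⟩)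
    (ψ := fun v : ({w} : Finset (Fin D)) → ℝ => v ⟨w, hw'⟩)
    (by fun_prop) (by fun_prop)

lemma aux_zero (hmeas : ∀ j, Measurable fun ω => ℓ ω j)
    (hindep : iIndepFun
      (fun j ω => ℓ ω j) μ)
    (hmean : ∀ j, (∫ ω, ℓ ω j ∂μ) = 0)
    (x y z w : Fin D) (hx : x ≠ w) (hy : y ≠ w) (hz : z ≠ w) :
    (∫ ω, ℓ ω x * ℓ ω y * ℓ ω z * ℓ ω w ∂μ) = 0 := by
  have h := (aux_indep_lone hmeas hindep x y z w hx hy hz).integral_fun_mul_eq_mul_integral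
    (((hmeas x).mul (hmeas y)).mul (hmeas z)).aestronglyMeasurable
    (hmeas w).aestronglyMeasurable
  rw [h, hmean w, mul_zero]

lemma aux_pair (hmeas : ∀ j, Measurable fun ω => ℓ ω j)
    (hindep : iIndepFun
      (fun j ω => ℓ ω j) μ)
    (hmom2 : ∀ j, (∫ ω, (ℓ ω j) ^ 2 ∂μ) = 1)
    (x y : Fin D) (hxy : x ≠ y) :
    (∫ ω, (ℓ ω x)^2 * (ℓ ω y)^2 ∂μ) = 1 := by
  have hI : IndepFun (fun ω => (ℓ ω x)^2) (fun ω => (ℓ ω y)^2) μ :=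
    (hindep.indepFun hxy).comp (φ := fun t : ℝ => t^2) (ψ := fun t : ℝ => t^2)
      (by fun_prop) (by fun_prop)
  rw [hI.integral_fun_mul_eq_mul_integral ((hmeas x).pow_const 2).aestronglyMeasurable
    ((hmeas y).pow_const 2).aestronglyMeasurable, hmom2 x, hmom2 y, mul_one]

lemma aux_moment4 (hmeas : ∀ j, Measurable fun ω => ℓ ω j)
    (hindep : iIndepFun
      (fun j ω => ℓ ω j) μ)
    (hmean : ∀ j, (∫ ω, ℓ ω j ∂μ) = 0)
    (hmom2 : ∀ j, (∫ ω, (ℓ ω j) ^ 2 ∂μ) = 1)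
    (hmom4 : ∀ j, (∫ ω, (ℓ ω j) ^ 4 ∂μ) = γ)
    (a b c d : Fin D) :
    (∫ ω, ℓ ω a * ℓ ω b * ℓ ω c * ℓ ω d ∂μ) =
      (if a = b then (1:ℝ) else 0) * (if c = d then 1 else 0)
      + (if a = c then (1:ℝ) else 0) * (if b = d then 1 else 0)
      + (if a = d then (1:ℝ) else 0) * (if b = c then 1 else 0)
      + (γ - 3) * (if a = b ∧ a = c ∧ a = d then (1:ℝ) else 0) := by
  have hz := aux_zero hmeas hindep hmean (μ := μ)
  have hp := aux_pair hmeas hindep hmom2 (μ := μ)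
  rcases eq_or_ne a b with rfl | hab
  · rcases eq_or_ne a c with rfl | hac
    · rcases eq_or_ne a d with rfl | had
      · rw [show (∫ ω, ℓ ω a * ℓ ω a * ℓ ω a * ℓ ω a ∂μ) = ∫ ω, (ℓ ω a)^4 ∂μ from by
          congr 1; funext ω; ring, hmom4 a]
        simp; ring
      · rw [hz a a a d had had had]
        simp [had]
    · rcases eq_or_ne c d with rfl | hcd
      · rw [show (∫ ω, ℓ ω a * ℓ ω a * ℓ ω c * ℓ ω c ∂μ) = ∫ ω, (ℓ ω a)^2 * (ℓ ω c)^2 ∂μ from by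
          congr 1; funext ω; ring, hp a c hac]
        simp [hac]
      · rcases eq_or_ne a d with rfl | had
        · rw [show (∫ ω, ℓ ω a * ℓ ω a * ℓ ω c * ℓ ω a ∂μ)
              = ∫ ω, ℓ ω a * ℓ ω a * ℓ ω a * ℓ ω c ∂μ from by
            congr 1; funext ω; ring, hz a a a c hac hac hac]
          simp [hac, hcd, fun h : c = a => hac h.symm]
        · rw [hz a a c d had had hcd]
          simp [had, hcd, fun h : c = a => hac h.symm]
  · rcases eq_or_ne a c with rfl | hac
    · rcases eq_or_ne b d with rfl | hbd
      · rw [show (∫ ω, ℓ ω a * ℓ ω b * ℓ ω a * ℓ ω b ∂μ) = ∫ ω, (ℓ ω a)^2 * (ℓ ω b)^2 ∂μ from by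
          congr 1; funext ω; ring, hp a b hab]
        simp [hab]
      · rcases eq_or_ne a d with rfl | had
        · rw [show (∫ ω, ℓ ω a * ℓ ω b * ℓ ω a * ℓ ω a ∂μ)
              = ∫ ω, ℓ ω a * ℓ ω a * ℓ ω a * ℓ ω b ∂μ from by
            congr 1; funext ω; ring, hz a a a b hab hab hab]
          simp [hab, hbd, fun h : b = a => hab h.symm]
        · rw [show (∫ ω, ℓ ω a * ℓ ω b * ℓ ω a * ℓ ω d ∂μ)
              = ∫ ω, ℓ ω a * ℓ ω b * ℓ ω a * ℓ ω d ∂μ from rfl,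
            hz a b a d had hbd had]
          simp [hab, hbd, had, fun h : b = a => hab h.symm]
    · rcases eq_or_ne a d with rfl | had
      · rcases eq_or_ne b c with rfl | hbc
        · rw [show (∫ ω, ℓ ω a * ℓ ω b * ℓ ω b * ℓ ω a ∂μ) = ∫ ω, (ℓ ω a)^2 * (ℓ ω b)^2 ∂μ from by
            congr 1; funext ω; ring, hp a b hab]
          simp [hab, hac]
        · rw [show (∫ ω, ℓ ω a * ℓ ω b * ℓ ω c * ℓ ω a ∂μ)
              = ∫ ω, ℓ ω a * ℓ ω c * ℓ ω a * ℓ ω b ∂μ from by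
            congr 1; funext ω; ring, hz a c a b hab (fun h => hbc h.symm) hab]
          simp [hab, hac, hbc]
      · rw [show (∫ ω, ℓ ω a * ℓ ω b * ℓ ω c * ℓ ω d ∂μ)
            = ∫ ω, ℓ ω b * ℓ ω c * ℓ ω d * ℓ ω a ∂μ from by
          congr 1; funext ω; ring, hz b c d a hab.symm hac.symm had.symm]
        simp [hab, hac, had]

lemma aux_integrable (hmeas : ∀ j, Measurable fun ω => ℓ ω j)
    (hint4 : ∀ j, Integrable (fun ω => (ℓ ω j) ^ 4) μ)
    (a b c d : Fin D) : Integrable (fun ω => ℓ ω a * ℓ ω b * ℓ ω c * ℓ ω d) μ := by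
  have hg : Integrable (fun ω => (ℓ ω a)^4 + (ℓ ω b)^4 + (ℓ ω c)^4 + (ℓ ω d)^4) μ :=
    (((hint4 a).add (hint4 b)).add (hint4 c)).add (hint4 d)
  refine hg.mono' ?_ ?_
  · exact ((((hmeas a).mul (hmeas b)).mul (hmeas c)).mul (hmeas d)).aestronglyMeasurable
  · filter_upwards with ω
    rw [Real.norm_eq_abs]
    set x := ℓ ω a; set y := ℓ ω b; set z := ℓ ω c; set w := ℓ ω d
    rcases abs_cases (x*y*z*w) with ⟨h,_⟩|⟨h,_⟩ <;> rw [h] <;>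
      nlinarith [sq_nonneg (x*y - z*w), sq_nonneg (x*y + z*w), sq_nonneg (x^2 - y^2),
        sq_nonneg (z^2 - w^2), sq_nonneg (x^2+y^2), sq_nonneg (z^2+w^2),
        sq_nonneg (x*y), sq_nonneg (z*w)]

end Aux

lemma aux_expand {D d₁ d₂ : ℕ} (M₁ : Matrix (Fin D) (Fin d₁) ℝ) (M₂ : Matrix (Fin D) (Fin d₂) ℝ)
    (v : Fin D → ℝ) (i j : Fin d₁) :
    ((M₁ᵀ * vecMulVec v v * M₂) * (M₂ᵀ * vecMulVec v v * M₁)) i j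
      = ∑ a, ∑ b, ∑ c, ∑ d, (M₁ a i * (M₂ * M₂ᵀ) b c * M₁ d j) * (v a * v b * v c * v d) := by
  classical
  set U : ℝ := ∑ a, M₁ a i * v a with hU
  set V : ℝ := ∑ d, M₁ d j * v d with hV
  set W : Fin d₂ → ℝ := fun e => ∑ b, v b * M₂ b e with hW
  have h1 : ∀ e, (M₁ᵀ * vecMulVec v v * M₂) i e = U * W e := by
    intro e
    simp only [Matrix.mul_apply, vecMulVec_apply, transpose_apply, hU, hW]
    calc ∑ b, (∑ a, M₁ a i * (v a * v b)) * M₂ b e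
        = ∑ b, ∑ a, (M₁ a i * v a) * (v b * M₂ b e) := by
          refine Finset.sum_congr rfl fun b _ => ?_
          rw [Finset.sum_mul]; exact Finset.sum_congr rfl fun a _ => by ring
      _ = ∑ a, ∑ b, (M₁ a i * v a) * (v b * M₂ b e) := Finset.sum_comm
      _ = (∑ a, M₁ a i * v a) * (∑ b, v b * M₂ b e) := (Finset.sum_mul_sum _ _ _ _).symm
  have h2 : ∀ e, (M₂ᵀ * vecMulVec v v * M₁) e j = W e * V := by
    intro e
    simp only [Matrix.mul_apply, vecMulVec_apply, transpose_apply, hV, hW]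
    calc ∑ d, (∑ c, M₂ c e * (v c * v d)) * M₁ d j
        = ∑ c, ∑ d, (v c * M₂ c e) * (M₁ d j * v d) := by
          rw [Finset.sum_comm]
          refine Finset.sum_congr rfl fun c _ => ?_
          rw [Finset.sum_mul]; exact Finset.sum_congr rfl fun d _ => by ring
      _ = (∑ c, v c * M₂ c e) * (∑ d, M₁ d j * v d) := (Finset.sum_mul_sum _ _ _ _).symm
  have hL : ((M₁ᵀ * vecMulVec v v * M₂) * (M₂ᵀ * vecMulVec v v * M₁)) i j
      = U * V * ∑ e, W e * W e := by
    rw [Matrix.mul_apply]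
    calc ∑ e, (M₁ᵀ * vecMulVec v v * M₂) i e * (M₂ᵀ * vecMulVec v v * M₁) e j
        = ∑ e, (U * W e) * (W e * V) :=
          Finset.sum_congr rfl fun e _ => by rw [h1 e, h2 e]
      _ = U * V * ∑ e, W e * W e := by
          rw [Finset.mul_sum]; exact Finset.sum_congr rfl fun e _ => by ring
  have hT : (∑ b, ∑ c, (M₂ * M₂ᵀ) b c * (v b * v c)) = ∑ e, W e * W e := by
    calc ∑ b, ∑ c, (M₂ * M₂ᵀ) b c * (v b * v c)
        = ∑ b, ∑ c, ∑ e, (v b * M₂ b e) * (v c * M₂ c e) := by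
          refine Finset.sum_congr rfl fun b _ => Finset.sum_congr rfl fun c _ => ?_
          simp only [Matrix.mul_apply, transpose_apply]
          rw [Finset.sum_mul]; exact Finset.sum_congr rfl fun e _ => by ring
      _ = ∑ b, ∑ e, ∑ c, (v b * M₂ b e) * (v c * M₂ c e) :=
          Finset.sum_congr rfl fun b _ => Finset.sum_comm
      _ = ∑ e, ∑ b, ∑ c, (v b * M₂ b e) * (v c * M₂ c e) := Finset.sum_comm
      _ = ∑ e, W e * W e := by
          refine Finset.sum_congr rfl fun e _ => ?_
          rw [hW, ← Finset.sum_mul_sum]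
  have hR : (∑ a, ∑ b, ∑ c, ∑ d, (M₁ a i * (M₂ * M₂ᵀ) b c * M₁ d j) * (v a * v b * v c * v d))
      = U * V * ∑ e, W e * W e := by
    rw [← hT]
    calc ∑ a, ∑ b, ∑ c, ∑ d, (M₁ a i * (M₂ * M₂ᵀ) b c * M₁ d j) * (v a * v b * v c * v d)
        = ∑ a, ∑ b, ∑ c, ∑ d, (M₁ a i * v a) * ((M₁ d j * v d) *
            ((M₂ * M₂ᵀ) b c * (v b * v c))) := by
          refine Finset.sum_congr rfl fun a _ => Finset.sum_congr rfl fun b _ =>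
            Finset.sum_congr rfl fun c _ => Finset.sum_congr rfl fun d _ => by ring
      _ = U * (V * ∑ b, ∑ c, (M₂ * M₂ᵀ) b c * (v b * v c)) := by
          simp only [← Finset.mul_sum, ← Finset.sum_mul]
          rw [hU, hV]
      _ = U * V * ∑ b, ∑ c, (M₂ * M₂ᵀ) b c * (v b * v c) := by ring
  rw [hL, hR]

lemma aux_alg {D d₁ d₂ : ℕ} (γ : ℝ) (M₁ : Matrix (Fin D) (Fin d₁) ℝ)
    (M₂ : Matrix (Fin D) (Fin d₂) ℝ) (i j : Fin d₁) :
    (∑ a, ∑ b, ∑ c, ∑ d, (M₁ a i * (M₂ * M₂ᵀ) b c * M₁ d j) *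
        ((if a = b then (1:ℝ) else 0) * (if c = d then 1 else 0)
        + (if a = c then (1:ℝ) else 0) * (if b = d then 1 else 0)
        + (if a = d then (1:ℝ) else 0) * (if b = c then 1 else 0)
        + (γ - 3) * (if a = b ∧ a = c ∧ a = d then (1:ℝ) else 0)))
      = (M₁ᵀ * ((γ - 3) • Matrix.diagonal (fun k => M₂ k ⬝ᵥ M₂ k)
          + (2 : ℝ) • (M₂ * M₂ᵀ)
          + (Matrix.trace (M₂ * M₂ᵀ)) • (1 : Matrix (Fin D) (Fin D) ℝ)) * M₁) i j := by
  classical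
  have hA : ∀ p q, (M₂ * M₂ᵀ) p q = ∑ e, M₂ p e * M₂ q e := by
    intro p q; simp [Matrix.mul_apply]
  have hsymm : ∀ p q, (M₂ * M₂ᵀ) q p = (M₂ * M₂ᵀ) p q := by
    intro p q; rw [hA, hA]; exact Finset.sum_congr rfl fun e _ => mul_comm _ _
  conv_lhs => simp only [mul_add, Finset.sum_add_distrib, ite_and, mul_ite, ite_mul, mul_zero,
    zero_mul, mul_one, one_mul, Finset.sum_ite_eq, Finset.sum_ite_eq', Finset.mem_univ, if_true,
    Finset.sum_ite_irrel, Finset.sum_const_zero]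
  conv_rhs => simp only [Matrix.mul_apply, Matrix.add_apply, Matrix.smul_apply,
    Matrix.diagonal_apply, Matrix.one_apply, transpose_apply, smul_eq_mul, mul_ite, mul_zero,
    mul_one, ite_mul, zero_mul, add_mul, mul_add, Finset.sum_add_distrib, Finset.sum_ite_eq,
    Finset.sum_ite_eq', Finset.mem_univ, if_true, Finset.sum_ite_irrel, Finset.sum_const_zero,
    Matrix.trace, Matrix.diag, dotProduct]
  have e2 : (∑ x : Fin D, ∑ y : Fin D, M₁ x i * (M₂ * M₂ᵀ) y x * M₁ y j)
      = ∑ x : Fin D, ∑ y : Fin D, M₁ x i * (M₂ * M₂ᵀ) x y * M₁ y j :=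
    Finset.sum_congr rfl fun x _ => Finset.sum_congr rfl fun y _ => by rw [hsymm]
  have e3 : (∑ x : Fin D, (∑ y : Fin D, M₁ y i * (2 * ∑ e, M₂ y e * M₂ x e)) * M₁ x j)
      = 2 * ∑ x : Fin D, ∑ y : Fin D, M₁ x i * (M₂ * M₂ᵀ) x y * M₁ y j := by
    calc ∑ x : Fin D, (∑ y : Fin D, M₁ y i * (2 * ∑ e, M₂ y e * M₂ x e)) * M₁ x j
        = ∑ x : Fin D, ∑ y : Fin D, (M₁ y i * (2 * ∑ e, M₂ y e * M₂ x e)) * M₁ x j :=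
          Finset.sum_congr rfl fun x _ => Finset.sum_mul _ _ _
      _ = ∑ y : Fin D, ∑ x : Fin D, (M₁ y i * (2 * ∑ e, M₂ y e * M₂ x e)) * M₁ x j :=
          Finset.sum_comm
      _ = 2 * ∑ x : Fin D, ∑ y : Fin D, M₁ x i * (M₂ * M₂ᵀ) x y * M₁ y j := by
          rw [Finset.mul_sum]
          refine Finset.sum_congr rfl fun p _ => ?_
          rw [Finset.mul_sum]
          refine Finset.sum_congr rfl fun q _ => ?_
          rw [hA]; ring
  have e4 : (∑ x : Fin D, ∑ y : Fin D, M₁ x i * (M₂ * M₂ᵀ) y y * M₁ x j)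
      = ∑ x : Fin D, (M₁ x i * ∑ k : Fin D, ∑ e, M₂ k e * M₂ k e) * M₁ x j := by
    refine Finset.sum_congr rfl fun x _ => ?_
    rw [← Finset.sum_mul, ← Finset.mul_sum]
    have hdg : (∑ y : Fin D, (M₂ * M₂ᵀ) y y) = ∑ k : Fin D, ∑ e, M₂ k e * M₂ k e :=
      Finset.sum_congr rfl fun y _ => hA y y
    rw [hdg]
  have e1 : (∑ x : Fin D, M₁ x i * (M₂ * M₂ᵀ) x x * M₁ x j * (γ - 3))
      = ∑ x : Fin D, M₁ x i * ((γ - 3) * ∑ e, M₂ x e * M₂ x e) * M₁ x j := by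
    refine Finset.sum_congr rfl fun x _ => ?_
    rw [hA]; ring
  rw [e2, e3, e4, e1]
  ring

/-- Let `ℓ = (α₁,…,α_D)` be a random vector in `ℝ^D` with i.i.d.
coordinates of mean `0`, second moment `1` and fourth moment `γ` (finite). Then for all
deterministic `M₁ ∈ ℝ^{D×d₁}` and `M₂ ∈ ℝ^{D×d₂}`,
`E[(M₁ᵀ ℓ ℓᵀ M₂)(M₂ᵀ ℓ ℓᵀ M₁)] = M₁ᵀ[(γ−3)·W₂ + 2·M₂M₂ᵀ + tr(M₂M₂ᵀ)·I_D]·M₁`,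
where `W₂ = diag(m₂₁ᵀm₂₁, …, m₂_Dᵀm₂_D)` is built from the rows of `M₂`. -/
theorem stmt_6 {Ω : Type*} [MeasurableSpace Ω] (μ : Measure Ω) [IsProbabilityMeasure μ]
    (D d₁ d₂ : ℕ) (hD : 0 < D) (hd₁ : 0 < d₁) (hd₂ : 0 < d₂) (γ : ℝ)
    (ℓ : Ω → Fin D → ℝ)
    (hmeas : ∀ j, Measurable fun ω => ℓ ω j)
    (hindep : iIndepFun
      (fun j ω => ℓ ω j) μ)
    (hident : ∀ j k, IdentDistrib (fun ω => ℓ ω j) (fun ω => ℓ ω k) μ μ)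
    (hint1 : ∀ j, Integrable (fun ω => ℓ ω j) μ)
    (hmean : ∀ j, (∫ ω, ℓ ω j ∂μ) = 0)
    (hint2 : ∀ j, Integrable (fun ω => (ℓ ω j) ^ 2) μ)
    (hmom2 : ∀ j, (∫ ω, (ℓ ω j) ^ 2 ∂μ) = 1)
    (hint4 : ∀ j, Integrable (fun ω => (ℓ ω j) ^ 4) μ)
    (hmom4 : ∀ j, (∫ ω, (ℓ ω j) ^ 4 ∂μ) = γ)
    (M₁ : Matrix (Fin D) (Fin d₁) ℝ) (M₂ : Matrix (Fin D) (Fin d₂) ℝ) :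
    ∀ i j,
      (∫ ω, ((M₁ᵀ * vecMulVec (ℓ ω) (ℓ ω) * M₂) * (M₂ᵀ * vecMulVec (ℓ ω) (ℓ ω) * M₁)) i j ∂μ)
        = (M₁ᵀ * ((γ - 3) • Matrix.diagonal (fun k => M₂ k ⬝ᵥ M₂ k)
            + (2 : ℝ) • (M₂ * M₂ᵀ)
            + (Matrix.trace (M₂ * M₂ᵀ)) • (1 : Matrix (Fin D) (Fin D) ℝ)) * M₁) i j := by
  intro i j
  have hexp : (fun ω => ((M₁ᵀ * vecMulVec (ℓ ω) (ℓ ω) * M₂)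
        * (M₂ᵀ * vecMulVec (ℓ ω) (ℓ ω) * M₁)) i j)
      = fun ω => ∑ a, ∑ b, ∑ c, ∑ d, (M₁ a i * (M₂ * M₂ᵀ) b c * M₁ d j)
        * (ℓ ω a * ℓ ω b * ℓ ω c * ℓ ω d) :=
    funext fun ω => aux_expand M₁ M₂ (ℓ ω) i j
  rw [hexp]
  have h0 : ∀ a b c d : Fin D, Integrable (fun ω => (M₁ a i * (M₂ * M₂ᵀ) b c * M₁ d j)
      * (ℓ ω a * ℓ ω b * ℓ ω c * ℓ ω d)) μ :=
    fun a b c d => (aux_integrable hmeas hint4 a b c d).const_mul _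
  have h1 : ∀ a b c : Fin D, Integrable (fun ω => ∑ d, (M₁ a i * (M₂ * M₂ᵀ) b c * M₁ d j)
      * (ℓ ω a * ℓ ω b * ℓ ω c * ℓ ω d)) μ :=
    fun a b c => integrable_finset_sum _ fun d _ => h0 a b c d
  have h2 : ∀ a b : Fin D, Integrable (fun ω => ∑ c, ∑ d, (M₁ a i * (M₂ * M₂ᵀ) b c * M₁ d j)
      * (ℓ ω a * ℓ ω b * ℓ ω c * ℓ ω d)) μ :=
    fun a b => integrable_finset_sum _ fun c _ => h1 a b c
  have h3 : ∀ a : Fin D, Integrable (fun ω => ∑ b, ∑ c, ∑ d, (M₁ a i * (M₂ * M₂ᵀ) b c * M₁ d j)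
      * (ℓ ω a * ℓ ω b * ℓ ω c * ℓ ω d)) μ :=
    fun a => integrable_finset_sum _ fun b _ => h2 a b
  rw [integral_finset_sum _ fun a _ => h3 a]
  have hswap : ∀ a : Fin D, (∫ ω, ∑ b, ∑ c, ∑ d, (M₁ a i * (M₂ * M₂ᵀ) b c * M₁ d j)
      * (ℓ ω a * ℓ ω b * ℓ ω c * ℓ ω d) ∂μ)
      = ∑ b, ∑ c, ∑ d, (M₁ a i * (M₂ * M₂ᵀ) b c * M₁ d j)
        * ((if a = b then (1:ℝ) else 0) * (if c = d then 1 else 0)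
          + (if a = c then (1:ℝ) else 0) * (if b = d then 1 else 0)
          + (if a = d then (1:ℝ) else 0) * (if b = c then 1 else 0)
          + (γ - 3) * (if a = b ∧ a = c ∧ a = d then (1:ℝ) else 0)) := by
    intro a
    rw [integral_finset_sum _ fun b _ => h2 a b]
    refine Finset.sum_congr rfl fun b _ => ?_
    rw [integral_finset_sum _ fun c _ => h1 a b c]
    refine Finset.sum_congr rfl fun c _ => ?_
    rw [integral_finset_sum _ fun d _ => h0 a b c d]
    refine Finset.sum_congr rfl fun d _ => ?_
    rw [integral_const_mul, aux_moment4 hmeas hindep hmean hmom2 hmom4 a b c d]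
  calc ∑ a, ∫ ω, ∑ b, ∑ c, ∑ d, (M₁ a i * (M₂ * M₂ᵀ) b c * M₁ d j)
        * (ℓ ω a * ℓ ω b * ℓ ω c * ℓ ω d) ∂μ
      = ∑ a, ∑ b, ∑ c, ∑ d, (M₁ a i * (M₂ * M₂ᵀ) b c * M₁ d j)
        * ((if a = b then (1:ℝ) else 0) * (if c = d then 1 else 0)
          + (if a = c then (1:ℝ) else 0) * (if b = d then 1 else 0)
          + (if a = d then (1:ℝ) else 0) * (if b = c then 1 else 0)
          + (γ - 3) * (if a = b ∧ a = c ∧ a = d then (1:ℝ) else 0)) :=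
        Finset.sum_congr rfl fun a _ => hswap a
    _ = _ := aux_alg γ M₁ M₂ i j
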